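/- Let P(t) be a rational parametrization of C such that the reparametrizing curve 𝔊(P) has at least one rational component M, and let (φ₁(t), φ₂(t)) ∈ K(t)² be a rational parametrization of M. Then the reparametrization P(φ₁(t)) is A-rdf; explicitly, φ₂ is not identically zero and (P₁(φ₁(t))−a)² + (P₂(φ₁(t))−b)² = ((φ₂(t)²+1)² / (2φ₂(t))²)·(P₂(φ₁(t))−b)². -/

import Mathlib

noncomputable section

namespace ConchoidPaper

open Polynomial

variable {K : Type*} [Field K]

/-- The squared norm `‖P‖² = b(P,P)` for the bilinear form
`b((x₁,x₂),(y₁,y₂)) = x₁y₁ + x₂y₂` on `K²`. -/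
def normSq (P : K × K) : K := P.1 * P.1 + P.2 * P.2

/-- The zero set in `K²` of a bivariate polynomial (variables `X 0 ↦ y₁`, `X 1 ↦ y₂`). -/
def zeroSet (f : MvPolynomial (Fin 2) K) : Set (K × K) :=
  {x | MvPolynomial.eval ![x.1, x.2] f = 0}

/-- Zariski closure in `K²`: the set of points at which every polynomial
vanishing identically on `S` vanishes. -/
def zClosure (S : Set (K × K)) : Set (K × K) :=
  {x | ∀ f : MvPolynomial (Fin 2) K,
      (∀ y ∈ S, MvPolynomial.eval ![y.1, y.2] f = 0) →
      MvPolynomial.eval ![x.1, x.2] f = 0}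

/-- `S` is Zariski closed in `K²`. -/
def IsZClosed (S : Set (K × K)) : Prop := zClosure S ⊆ S

/-- `S` is irreducible for the Zariski topology on `K²`: it is nonempty and is not
covered by two Zariski-closed sets unless it is contained in one of them. -/
def IsZIrreducible (S : Set (K × K)) : Prop :=
  S.Nonempty ∧
  ∀ F₁ F₂ : Set (K × K), IsZClosed F₁ → IsZClosed F₂ → S ⊆ F₁ ∪ F₂ → S ⊆ F₁ ∨ S ⊆ F₂

/-- `M` is an irreducible component of `X`: a maximal Zariski-closed irreducible subset. -/
def IsComponent (X M : Set (K × K)) : Prop :=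
  M ⊆ X ∧ IsZClosed M ∧ IsZIrreducible M ∧
  ∀ M' : Set (K × K), M' ⊆ X → IsZClosed M' → IsZIrreducible M' → M ⊆ M' → M' = M

/-- `Ω` is a nonempty Zariski-dense subset of `M`. -/
def IsDenseIn (Ω M : Set (K × K)) : Prop :=
  Ω.Nonempty ∧ Ω ⊆ M ∧ M ⊆ zClosure Ω

/-- The conchoid incidence variety `B(C)` of the curve `C = zeroSet f` from the focus `A`
at distance `d`: triples `(x̄, ȳ, λ)` with `f(ȳ) = 0`, `‖x̄ − ȳ‖² = d²` and
`x̄ = A + λ(ȳ − A)`. -/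
def incidence (f : MvPolynomial (Fin 2) K) (A : K × K) (d : K) :
    Set ((K × K) × (K × K) × K) :=
  {w | w.2.1 ∈ zeroSet f ∧ normSq (w.1 - w.2.1) = d ^ 2 ∧ w.1 = A + w.2.2 • (w.2.1 - A)}

/-- The conchoid `𝔠(C,A,d)`: the Zariski closure of `π₁(B(C))`. -/
def conchoid (f : MvPolynomial (Fin 2) K) (A : K × K) (d : K) : Set (K × K) :=
  zClosure (Prod.fst '' incidence f A d)

/-- `S` is one of the two isotropic lines `y₁ ± √(-1) y₂ = 0`. -/
def IsIsotropicLine (S : Set (K × K)) : Prop :=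
  ∃ s : K, s ^ 2 = -1 ∧ S = {y : K × K | y.1 + s * y.2 = 0}

/-- `S` is a line passing through the point `A`. -/
def IsLineThrough (S : Set (K × K)) (A : K × K) : Prop :=
  ∃ u v : K, (u ≠ 0 ∨ v ≠ 0) ∧
    S = {y : K × K | u * (y.1 - A.1) + v * (y.2 - A.2) = 0}

/-- `S` is a line in `K²`. -/
def IsLine (S : Set (K × K)) : Prop :=
  ∃ u v w : K, (u ≠ 0 ∨ v ≠ 0) ∧ S = {y : K × K | u * y.1 + v * y.2 + w = 0}

/-- The circle of center `A` and radius `d`, i.e. `‖ȳ − A‖² = d²`. -/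
def circleSet (A : K × K) (d : K) : Set (K × K) := {y : K × K | normSq (y - A) = d ^ 2}

/-- The point of `K²` obtained by evaluating the pair of rational functions `P` at `t`. -/
def ratPoint (P : RatFunc K × RatFunc K) (t : K) : K × K :=
  (P.1.num.eval t / P.1.denom.eval t, P.2.num.eval t / P.2.denom.eval t)

/-- `t` avoids the poles of both components of `P`. -/
def PolesAvoided (P : RatFunc K × RatFunc K) (t : K) : Prop :=
  P.1.denom.eval t ≠ 0 ∧ P.2.denom.eval t ≠ 0

/-- The image of the pair of rational functions `P`, poles avoided. -/
def paramImage (P : RatFunc K × RatFunc K) : Set (K × K) :=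
  {x | ∃ t : K, PolesAvoided P t ∧ x = ratPoint P t}

/-- `P ∈ K(t)²` is a rational parametrization of the set `S ⊆ K²`: its components are
not both constant, its image lies in `S`, and its image is Zariski dense in `S`. -/
def IsParamOf (S : Set (K × K)) (P : RatFunc K × RatFunc K) : Prop :=
  (¬ ∃ c : K × K, P.1 = RatFunc.C c.1 ∧ P.2 = RatFunc.C c.2) ∧
  paramImage P ⊆ S ∧ S ⊆ zClosure (paramImage P)

/-- `S` is rational: it admits a rational parametrization. -/
def IsRationalSet (S : Set (K × K)) : Prop := ∃ P : RatFunc K × RatFunc K, IsParamOf S P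

/-- `P` is proper: `K(P₁,P₂) = K(t)`. -/
def IsProper (P : RatFunc K × RatFunc K) : Prop :=
  IntermediateField.adjoin K {P.1, P.2} = ⊤

/-- `P` is at rational distance to the focus `A` (`A`-rdf):
`(P₁ − a)² + (P₂ − b)² = m(t)²` for some rational function `m`. -/
def IsRDF (A : K × K) (P : RatFunc K × RatFunc K) : Prop :=
  ∃ m : RatFunc K, (P.1 - RatFunc.C A.1) ^ 2 + (P.2 - RatFunc.C A.2) ^ 2 = m ^ 2

/-- A field is trivially a normalized GCD monoid; this makes `K[x₁]` a normalized GCD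
monoid, so that primitive parts w.r.t. `x₂` of polynomials in `K[x₁][x₂]` make sense. -/
noncomputable local instance : NormalizedGCDMonoid K := by
  classical exact
    letI := CommGroupWithZero.instStrongNormalizedGCDMonoid K; inferInstance

/-- The numerator of `−2x₂(P₁(x₁) − a) + (x₂² − 1)(P₂(x₁) − b)`, written as a polynomial
in `x₂` (outer variable) with coefficients in `K[x₁]` (inner variable). -/
def repNum (A : K × K) (P : RatFunc K × RatFunc K) : Polynomial (Polynomial K) :=
  Polynomial.C ((P.2 - RatFunc.C A.2).num * (P.1 - RatFunc.C A.1).denom) *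
      (Polynomial.X ^ 2 - 1) +
    Polynomial.C (-2 * ((P.1 - RatFunc.C A.1).num * (P.2 - RatFunc.C A.2).denom)) *
      Polynomial.X

/-- Defining polynomial of the reparametrizing curve `𝔊(P)`: the primitive part with
respect to `x₂` of the numerator of `−2x₂(P₁(x₁) − a) + (x₂² − 1)(P₂(x₁) − b)`. -/
def repPoly (A : K × K) (P : RatFunc K × RatFunc K) : Polynomial (Polynomial K) :=
  (repNum A P).primPart

/-- Zero set in the `(x₁,x₂)`-plane of `g ∈ K[x₁][x₂]` (`x₂` outer, `x₁` inner). -/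
def zeroSetP (g : Polynomial (Polynomial K)) : Set (K × K) :=
  {x | Polynomial.eval₂ (Polynomial.evalRingHom x.1) x.2 g = 0}

/-- The reparametrizing curve `𝔊(P)` has at least one rational component, i.e. some
irreducible factor of its defining polynomial defines a rational curve. -/
def repHasRatComponent (A : K × K) (P : RatFunc K × RatFunc K) : Prop :=
  ∃ g : Polynomial (Polynomial K), Irreducible g ∧ g ∣ repPoly A P ∧
    IsRationalSet (zeroSetP g)

/-- The reparametrizing curve `𝔊(P)` is rational: its defining polynomial is
irreducible and its zero set admits a rational parametrization. -/
def repIsRational (A : K × K) (P : RatFunc K × RatFunc K) : Prop :=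
  Irreducible (repPoly A P) ∧ IsRationalSet (zeroSetP (repPoly A P))

/-- Composition `P ∘ φ` of rational functions. -/
def comp (P φ : RatFunc K) : RatFunc K :=
  Polynomial.aeval φ P.num / Polynomial.aeval φ P.denom

/-- `M` is a simple component of the conchoid: an irreducible component possessing a
nonempty Zariski-dense subset `Ω` such that each `Q ∈ Ω` has exactly one point in
`π₂(π₁⁻¹(Q))`. -/
def IsSimpleComponent (f : MvPolynomial (Fin 2) K) (A : K × K) (d : K)
    (M : Set (K × K)) : Prop :=
  IsComponent (conchoid f A d) M ∧
  ∃ Ω : Set (K × K), IsDenseIn Ω M ∧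
    ∀ Q ∈ Ω, ∃! y : K × K, ∃ l : K, (Q, y, l) ∈ incidence f A d

section Aux


/-- Evaluation of a rational function at a point. -/
def ev (t : K) (x : RatFunc K) : K := RatFunc.eval (RingHom.id K) t x

theorem eval₂_id (q : K[X]) (t : K) : q.eval₂ (RingHom.id K) t = q.eval t := rfl

theorem ev_def (t : K) (x : RatFunc K) : ev t x = x.num.eval t / x.denom.eval t := rfl

theorem eval_ne_zero_of_dvd {q r : K[X]} (h : q ∣ r) {t : K} (hr : r.eval t ≠ 0) :
    q.eval t ≠ 0 := by
  obtain ⟨s, rfl⟩ := h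
  simp only [Polynomial.eval_mul, ne_eq, mul_eq_zero, not_or] at hr
  exact hr.1

/-- Denominator of `aeval ψ q` divides a power of the denominator of `ψ`. -/
theorem denom_aeval_dvd (ψ : RatFunc K) (q : K[X]) :
    ∃ a : ℕ, (Polynomial.aeval ψ q : RatFunc K).denom ∣ ψ.denom ^ a := by
  induction q using Polynomial.induction_on with
  | C c =>
      refine ⟨0, ?_⟩
      rw [pow_zero, Polynomial.aeval_C, RatFunc.algebraMap_eq_C]
      simp
  | add p q hp hq =>
      obtain ⟨a, ha⟩ := hp; obtain ⟨b, hb⟩ := hq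
      refine ⟨a + b, ?_⟩
      rw [map_add, pow_add]
      exact (RatFunc.denom_add_dvd _ _).trans (mul_dvd_mul ha hb)
  | monomial n c hp =>
      obtain ⟨a, ha⟩ := hp
      refine ⟨a + 1, ?_⟩
      have : (Polynomial.aeval ψ (Polynomial.C c * Polynomial.X ^ (n + 1)) : RatFunc K)
          = Polynomial.aeval ψ (Polynomial.C c * Polynomial.X ^ n) * ψ := by
        simp [pow_succ, mul_assoc]
      rw [this, pow_succ]
      exact (RatFunc.denom_mul_dvd _ _).trans (mul_dvd_mul ha dvd_rfl)

theorem denom_aeval_eval_ne_zero (ψ : RatFunc K) (q : K[X]) {t : K}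
    (ht : ψ.denom.eval t ≠ 0) :
    ((Polynomial.aeval ψ q : RatFunc K).denom).eval t ≠ 0 := by
  obtain ⟨a, ha⟩ := denom_aeval_dvd ψ q
  exact eval_ne_zero_of_dvd ha (by simpa using pow_ne_zero a ht)

theorem ev_aeval (ψ : RatFunc K) (q : K[X]) {t : K} (ht : ψ.denom.eval t ≠ 0) :
    ev t (Polynomial.aeval ψ q) = q.eval (ev t ψ) := by
  induction q using Polynomial.induction_on with
  | C c =>
      simp only [Polynomial.aeval_C, Polynomial.eval_C]
      rw [RatFunc.algebraMap_eq_C]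
      exact RatFunc.eval_C _ _
  | add p q hp hq =>
      have hpa : ((Polynomial.aeval ψ p : RatFunc K).denom).eval₂ (RingHom.id K) t ≠ 0 := by
        rw [eval₂_id]; exact denom_aeval_eval_ne_zero ψ p ht
      have hqa : ((Polynomial.aeval ψ q : RatFunc K).denom).eval₂ (RingHom.id K) t ≠ 0 := by
        rw [eval₂_id]; exact denom_aeval_eval_ne_zero ψ q ht
      rw [map_add, Polynomial.eval_add, ← hp, ← hq]
      exact RatFunc.eval_add (hx := hpa) (hy := hqa)
  | monomial n c hp =>
      have hpa : ((Polynomial.aeval ψ (Polynomial.C c * Polynomial.X ^ n) :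
          RatFunc K).denom).eval₂ (RingHom.id K) t ≠ 0 := by
        rw [eval₂_id]; exact denom_aeval_eval_ne_zero ψ _ ht
      have hψ : (ψ.denom).eval₂ (RingHom.id K) t ≠ 0 := by rw [eval₂_id]; exact ht
      have h1 : (Polynomial.aeval ψ (Polynomial.C c * Polynomial.X ^ (n + 1)) : RatFunc K)
          = Polynomial.aeval ψ (Polynomial.C c * Polynomial.X ^ n) * ψ := by
        simp [pow_succ, mul_assoc]
      rw [h1]
      have h2 : ev t (Polynomial.aeval ψ (Polynomial.C c * Polynomial.X ^ n) * ψ)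
          = ev t (Polynomial.aeval ψ (Polynomial.C c * Polynomial.X ^ n)) * ev t ψ :=
        RatFunc.eval_mul (hx := hpa) (hy := hψ)
      rw [h2, hp]
      simp [Polynomial.eval_mul, pow_succ, mul_assoc]

/-- Substitution of `(φ₁, φ₂)` into a bivariate polynomial. -/
def subst (φ₁ φ₂ : RatFunc K) : Polynomial (Polynomial K) →+* RatFunc K :=
  Polynomial.eval₂RingHom ((Polynomial.aeval φ₁).toRingHom : K[X] →+* RatFunc K) φ₂

theorem subst_apply (φ₁ φ₂ : RatFunc K) (p : Polynomial (Polynomial K)) :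
    subst φ₁ φ₂ p = Polynomial.eval₂ ((Polynomial.aeval φ₁).toRingHom : K[X] →+* RatFunc K)
      φ₂ p := rfl

theorem subst_C (φ₁ φ₂ : RatFunc K) (q : K[X]) :
    subst φ₁ φ₂ (Polynomial.C q) = Polynomial.aeval φ₁ q := by
  rw [subst_apply, Polynomial.eval₂_C]; rfl

theorem subst_X (φ₁ φ₂ : RatFunc K) : subst φ₁ φ₂ Polynomial.X = φ₂ := by
  rw [subst_apply, Polynomial.eval₂_X]

theorem subst_CX (φ₁ φ₂ : RatFunc K) (q : K[X]) (m : ℕ) :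
    subst φ₁ φ₂ (Polynomial.C q * Polynomial.X ^ m)
      = Polynomial.aeval φ₁ q * φ₂ ^ m := by
  rw [map_mul, map_pow, subst_C, subst_X]

theorem subst_CX_succ (φ₁ φ₂ : RatFunc K) (q : K[X]) (n : ℕ) :
    subst φ₁ φ₂ (Polynomial.C q * Polynomial.X ^ (n + 1))
      = subst φ₁ φ₂ (Polynomial.C q * Polynomial.X ^ n) * φ₂ := by
  rw [subst_CX, subst_CX, pow_succ, mul_assoc]

theorem denom_subst_dvd (φ₁ φ₂ : RatFunc K) (p : Polynomial (Polynomial K)) :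
    ∃ a b : ℕ, (subst φ₁ φ₂ p).denom ∣ φ₁.denom ^ a * φ₂.denom ^ b := by
  induction p using Polynomial.induction_on with
  | C q =>
      obtain ⟨a, ha⟩ := denom_aeval_dvd φ₁ q
      refine ⟨a, 0, ?_⟩
      rw [pow_zero, mul_one, subst_C]
      exact ha
  | add p q hp hq =>
      obtain ⟨a, b, ha⟩ := hp; obtain ⟨c, d, hb⟩ := hq
      refine ⟨a + c, b + d, ?_⟩
      rw [map_add, pow_add, pow_add, mul_mul_mul_comm]
      exact (RatFunc.denom_add_dvd _ _).trans (mul_dvd_mul ha hb)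
  | monomial n q hp =>
      obtain ⟨a, b, ha⟩ := hp
      refine ⟨a, b + 1, ?_⟩
      rw [subst_CX_succ, pow_succ, ← mul_assoc]
      exact (RatFunc.denom_mul_dvd _ _).trans (mul_dvd_mul ha dvd_rfl)

theorem denom_subst_eval_ne_zero (φ₁ φ₂ : RatFunc K) (p : Polynomial (Polynomial K)) {t : K}
    (h1 : φ₁.denom.eval t ≠ 0) (h2 : φ₂.denom.eval t ≠ 0) :
    ((subst φ₁ φ₂ p).denom).eval t ≠ 0 := by
  obtain ⟨a, b, ha⟩ := denom_subst_dvd φ₁ φ₂ p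
  refine eval_ne_zero_of_dvd ha ?_
  rw [Polynomial.eval_mul]
  exact mul_ne_zero (by simpa using pow_ne_zero a h1) (by simpa using pow_ne_zero b h2)

theorem ev_subst (φ₁ φ₂ : RatFunc K) (p : Polynomial (Polynomial K)) {t : K}
    (h1 : φ₁.denom.eval t ≠ 0) (h2 : φ₂.denom.eval t ≠ 0) :
    ev t (subst φ₁ φ₂ p)
      = Polynomial.eval₂ (Polynomial.evalRingHom (ev t φ₁)) (ev t φ₂) p := by
  induction p using Polynomial.induction_on with
  | C q =>
      rw [subst_C, Polynomial.eval₂_C]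
      exact ev_aeval φ₁ q h1
  | add p q hp hq =>
      have hpa : ((subst φ₁ φ₂ p).denom).eval₂ (RingHom.id K) t ≠ 0 := by
        rw [eval₂_id]; exact denom_subst_eval_ne_zero φ₁ φ₂ p h1 h2
      have hqa : ((subst φ₁ φ₂ q).denom).eval₂ (RingHom.id K) t ≠ 0 := by
        rw [eval₂_id]; exact denom_subst_eval_ne_zero φ₁ φ₂ q h1 h2
      rw [map_add, Polynomial.eval₂_add, ← hp, ← hq]
      exact RatFunc.eval_add (hx := hpa) (hy := hqa)
  | monomial n q hp =>
      have hpa : ((subst φ₁ φ₂ (Polynomial.C q * Polynomial.X ^ n)).denom).eval₂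
          (RingHom.id K) t ≠ 0 := by
        rw [eval₂_id]; exact denom_subst_eval_ne_zero φ₁ φ₂ _ h1 h2
      have hφ : (φ₂.denom).eval₂ (RingHom.id K) t ≠ 0 := by rw [eval₂_id]; exact h2
      have h3 : ev t (subst φ₁ φ₂ (Polynomial.C q * Polynomial.X ^ n) * φ₂)
          = ev t (subst φ₁ φ₂ (Polynomial.C q * Polynomial.X ^ n)) * ev t φ₂ :=
        RatFunc.eval_mul (hx := hpa) (hy := hφ)
      rw [subst_CX_succ, h3, hp]
      simp only [Polynomial.eval₂_mul, Polynomial.eval₂_C, Polynomial.eval₂_X_pow, pow_succ,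
        mul_assoc, Polynomial.eval₂_X]

theorem infinite_nonroots [Infinite K] {p : K[X]} (hp : p ≠ 0) :
    {t : K | p.eval t ≠ 0}.Infinite := by
  have h := Polynomial.finite_setOf_isRoot hp
  have : {t : K | p.eval t ≠ 0} = {t : K | p.IsRoot t}ᶜ := by
    ext t; simp [Polynomial.IsRoot]
  rw [this]
  exact Set.Finite.infinite_compl h

theorem ratfunc_eq_zero_of_infinite {x : RatFunc K}
    (h : {t : K | x.denom.eval t ≠ 0 ∧ ev t x = 0}.Infinite) : x = 0 := by
  rw [← RatFunc.num_eq_zero_iff]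
  by_contra hnum
  refine Set.not_infinite.mpr ((Polynomial.finite_setOf_isRoot hnum).subset ?_) h
  rintro t ⟨hd, he⟩
  rw [ev_def, _root_.div_eq_zero_iff] at he
  rcases he with he | he
  · exact he
  · exact absurd he hd

theorem infinite_ev_image [Infinite K] {ψ : RatFunc K} (hψ : ¬∃ c : K, ψ = RatFunc.C c)
    {S : Set K} (hS : S.Infinite) (hSd : ∀ t ∈ S, ψ.denom.eval t ≠ 0) :
    ((fun t => ev t ψ) '' S).Infinite := by
  by_contra h
  rw [Set.not_infinite] at h
  have hfib : ∀ v : K, {t ∈ S | ev t ψ = v}.Finite := by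
    intro v
    have hne : ψ.num - Polynomial.C v * ψ.denom ≠ 0 := by
      intro hz
      refine hψ ⟨v, ?_⟩
      have hnum : ψ.num = Polynomial.C v * ψ.denom := sub_eq_zero.mp hz
      rw [← RatFunc.num_div_denom ψ, hnum, map_mul, RatFunc.algebraMap_C,
        mul_div_assoc, div_self (RatFunc.algebraMap_ne_zero (RatFunc.denom_ne_zero ψ)),
        mul_one]
    refine (Polynomial.finite_setOf_isRoot hne).subset ?_
    rintro t ⟨htS, htv⟩
    have hd := hSd t htS
    have : ψ.num.eval t / ψ.denom.eval t = v := htv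
    have hnum : ψ.num.eval t = v * ψ.denom.eval t := by
      rw [div_eq_iff hd] at this
      rw [this, mul_comm]
    simp [Polynomial.IsRoot, hnum]
  have : S ⊆ ⋃ v ∈ ((fun t => ev t ψ) '' S), {t ∈ S | ev t ψ = v} := by
    intro t ht
    exact Set.mem_biUnion (Set.mem_image_of_mem _ ht) ⟨ht, rfl⟩
  exact hS (Set.Finite.subset (h.biUnion fun v _ => hfib v) this)

theorem aeval_ne_zero_of_nonconst [Infinite K] {ψ : RatFunc K}
    (hψ : ¬∃ c : K, ψ = RatFunc.C c) {q : K[X]} (hq : q ≠ 0) :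
    Polynomial.aeval ψ q ≠ (0 : RatFunc K) := by
  intro h0
  have hS : {t : K | ψ.denom.eval t ≠ 0}.Infinite :=
    infinite_nonroots (RatFunc.denom_ne_zero ψ)
  have himg := infinite_ev_image hψ hS (fun t ht => ht)
  refine Set.not_infinite.mpr ((Polynomial.finite_setOf_isRoot hq).subset ?_) himg
  rintro v ⟨t, ht, rfl⟩
  have := ev_aeval ψ q ht
  rw [h0] at this
  have h2 : ev t (0 : RatFunc K) = 0 := by simp [ev, RatFunc.eval_zero]
  simp [Polynomial.IsRoot, ← this, h2]


end Aux

/-- Corollary 2 of the paper. If `𝔊(P)` has a rational component `M`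
parametrized by `(φ₁, φ₂)`, then `P(φ₁(t))` is `A`-rdf; explicitly `φ₂ ≠ 0` and
`(P₁(φ₁)−a)² + (P₂(φ₁)−b)² = ((φ₂²+1)²/(2φ₂)²)·(P₂(φ₁)−b)²`. -/
theorem reparametrization_by_rational_component_is_rdf
    [IsAlgClosed K] [CharZero K]
    (f : MvPolynomial (Fin 2) K) (A : K × K)
    (hf : Irreducible f)
    (hiso : ¬ IsIsotropicLine (zeroSet f))
    (hline : ¬ IsLineThrough (zeroSet f) A)
    (P : RatFunc K × RatFunc K) (hP : IsParamOf (zeroSet f) P)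
    (g : Polynomial (Polynomial K)) (hg : Irreducible g) (hgdvd : g ∣ repPoly A P)
    (φ₁ φ₂ : RatFunc K) (hφ : IsParamOf (zeroSetP g) (φ₁, φ₂)) :
    IsRDF A (comp P.1 φ₁, comp P.2 φ₁) ∧ φ₂ ≠ 0 ∧
    (comp P.1 φ₁ - RatFunc.C A.1) ^ 2 + (comp P.2 φ₁ - RatFunc.C A.2) ^ 2 =
      ((φ₂ ^ 2 + 1) ^ 2 / (2 * φ₂) ^ 2) * (comp P.2 φ₁ - RatFunc.C A.2) ^ 2 := by
  classical
  obtain ⟨hφnc, hφim, _⟩ := hφ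
  set u : RatFunc K := P.1 - RatFunc.C A.1 with hu_def
  set v : RatFunc K := P.2 - RatFunc.C A.2 with hv_def
  -- Step 1: `g(φ₁, φ₂) = 0` as a rational function.
  have hsubg : subst φ₁ φ₂ g = 0 := by
    apply ratfunc_eq_zero_of_infinite
    have hne : φ₁.denom * (φ₂.denom * (subst φ₁ φ₂ g).denom) ≠ 0 :=
      mul_ne_zero (RatFunc.denom_ne_zero _)
        (mul_ne_zero (RatFunc.denom_ne_zero _) (RatFunc.denom_ne_zero _))
    refine (infinite_nonroots hne).mono ?_
    intro t ht
    simp only [Set.mem_setOf_eq, Polynomial.eval_mul, ne_eq, mul_eq_zero, not_or] at ht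
    obtain ⟨h1, h2, h3⟩ := ht
    refine ⟨h3, ?_⟩
    rw [ev_subst φ₁ φ₂ g h1 h2]
    exact hφim ⟨t, ⟨h1, h2⟩, rfl⟩
  -- Step 2: the same for the numerator of the reparametrizing curve.
  have hsubrep : subst φ₁ φ₂ (repNum A P) = 0 := by
    obtain ⟨h, hh⟩ := hgdvd
    rw [(repNum A P).eq_C_content_mul_primPart]
    have hpp : (repNum A P).primPart = g * h := hh
    rw [hpp, map_mul, map_mul, hsubg, zero_mul, mul_zero]
  have hrel : Polynomial.aeval φ₁ v.num * Polynomial.aeval φ₁ u.denom * (φ₂ ^ 2 - 1)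
      + -2 * (Polynomial.aeval φ₁ u.num * Polynomial.aeval φ₁ v.denom) * φ₂ = 0 := by
    have hexp : subst φ₁ φ₂ (repNum A P)
        = Polynomial.aeval φ₁ v.num * Polynomial.aeval φ₁ u.denom * (φ₂ ^ 2 - 1)
          + -2 * (Polynomial.aeval φ₁ u.num * Polynomial.aeval φ₁ v.denom) * φ₂ := by
      simp only [repNum, map_add, map_mul, map_sub, map_pow, map_one, map_neg, map_ofNat,
        subst_C, subst_X, ← hu_def, ← hv_def]
    rw [← hexp, hsubrep]
  -- `repNum A P ≠ 0`.
  have hrn : repNum A P ≠ 0 := by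
    intro h0
    have h2 := congrArg (fun p => Polynomial.coeff p 2) h0
    simp only [repNum, Polynomial.coeff_add, Polynomial.coeff_C_mul, Polynomial.coeff_sub,
      Polynomial.coeff_X_pow, Polynomial.coeff_one, Polynomial.coeff_X,
      Polynomial.coeff_zero] at h2
    norm_num at h2
    have h1 := congrArg (fun p => Polynomial.coeff p 1) h0
    simp only [repNum, Polynomial.coeff_add, Polynomial.coeff_C_mul, Polynomial.coeff_sub,
      Polynomial.coeff_X_pow, Polynomial.coeff_one, Polynomial.coeff_X,
      Polynomial.coeff_zero] at h1
    norm_num at h1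
    have hv0 : v = 0 := h2.resolve_right (RatFunc.denom_ne_zero u)
    have hu0 : u = 0 := h1.resolve_right (RatFunc.denom_ne_zero v)
    exact hP.1 ⟨A, sub_eq_zero.mp hu0, sub_eq_zero.mp hv0⟩
  -- `φ₁` is not constant.
  have hφ₁nc : ¬∃ c : K, φ₁ = RatFunc.C c := by
    rintro ⟨c, rfl⟩
    have hφ₂nc : ¬∃ c₂ : K, φ₂ = RatFunc.C c₂ := by
      rintro ⟨c₂, rfl⟩
      exact hφnc ⟨(c, c₂), rfl, rfl⟩
    have hhom : ((Polynomial.aeval (RatFunc.C c)).toRingHom : K[X] →+* RatFunc K)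
        = (algebraMap K (RatFunc K)).comp (Polynomial.evalRingHom c) := by
      apply Polynomial.ringHom_ext
      · intro a
        simp [RatFunc.algebraMap_eq_C]
      · simp [RatFunc.algebraMap_eq_C]
    have hmap : subst (RatFunc.C c) φ₂ g
        = Polynomial.aeval φ₂ (g.map (Polynomial.evalRingHom c)) := by
      rw [subst_apply, hhom, ← Polynomial.eval₂_map]
      rfl
    have hg0 : g.map (Polynomial.evalRingHom c) = 0 := by
      by_contra hne
      exact aeval_ne_zero_of_nonconst hφ₂nc hne (hmap ▸ hsubg)
    have hdvd : Polynomial.C (Polynomial.X - Polynomial.C c) ∣ g := by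
      rw [Polynomial.C_dvd_iff_dvd_coeff]
      intro i
      rw [Polynomial.dvd_iff_isRoot]
      have hcoeff : (g.map (Polynomial.evalRingHom c)).coeff i = 0 := by rw [hg0]; simp
      rw [Polynomial.coeff_map] at hcoeff
      exact hcoeff
    exact Polynomial.not_isUnit_X_sub_C c
      (Polynomial.isPrimitive_primPart (repNum A P) _ (hdvd.trans hgdvd))
  -- The substitution homomorphism `Φ : K(t) → K(t)`, `t ↦ φ₁`.
  have hainj : Function.Injective ((Polynomial.aeval φ₁).toRingHom : K[X] →+* RatFunc K) := by
    intro p q hpq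
    by_contra hne
    refine aeval_ne_zero_of_nonconst hφ₁nc (sub_ne_zero.mpr hne) ?_
    rw [map_sub, show (Polynomial.aeval φ₁) p = (Polynomial.aeval φ₁) q from hpq, sub_self]
  set Φ : RatFunc K →+* RatFunc K := IsFractionRing.lift hainj with hΦ_def
  have hΦalg : ∀ p : K[X], Φ (algebraMap K[X] (RatFunc K) p) = Polynomial.aeval φ₁ p :=
    fun p => IsFractionRing.lift_algebraMap hainj p
  have hΦx : ∀ x : RatFunc K, Φ x
      = Polynomial.aeval φ₁ x.num / Polynomial.aeval φ₁ x.denom := by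
    intro x
    conv_lhs => rw [← RatFunc.num_div_denom x]
    rw [map_div₀, hΦalg, hΦalg]
  have hcomp1 : comp P.1 φ₁ = Φ P.1 := by rw [hΦx]; rfl
  have hcomp2 : comp P.2 φ₁ = Φ P.2 := by rw [hΦx]; rfl
  have hΦC : ∀ c : K, Φ (RatFunc.C c) = RatFunc.C c := by
    intro c
    calc Φ (RatFunc.C c) = Φ (algebraMap K[X] (RatFunc K) (Polynomial.C c)) := by
          rw [RatFunc.algebraMap_C]
      _ = Polynomial.aeval φ₁ (Polynomial.C c) := hΦalg _
      _ = RatFunc.C c := by rw [Polynomial.aeval_C, RatFunc.algebraMap_eq_C]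
  have hU : comp P.1 φ₁ - RatFunc.C A.1 = Φ u := by
    rw [hu_def, map_sub, hΦC, hcomp1]
  have hV : comp P.2 φ₁ - RatFunc.C A.2 = Φ v := by
    rw [hv_def, map_sub, hΦC, hcomp2]
  have hnum_eq : ∀ x : RatFunc K, Polynomial.aeval φ₁ x.num
      = Φ x * Polynomial.aeval φ₁ x.denom := by
    intro x
    rw [hΦx, div_mul_cancel₀]
    exact aeval_ne_zero_of_nonconst hφ₁nc (RatFunc.denom_ne_zero x)
  have hDu : Polynomial.aeval φ₁ u.denom ≠ (0 : RatFunc K) :=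
    aeval_ne_zero_of_nonconst hφ₁nc (RatFunc.denom_ne_zero u)
  have hDv : Polynomial.aeval φ₁ v.denom ≠ (0 : RatFunc K) :=
    aeval_ne_zero_of_nonconst hφ₁nc (RatFunc.denom_ne_zero v)
  -- The key algebraic relation.
  have hkey : Φ v * (φ₂ ^ 2 - 1) = 2 * Φ u * φ₂ := by
    rw [hnum_eq v, hnum_eq u] at hrel
    have hrel2 : (Φ v * (φ₂ ^ 2 - 1) - 2 * Φ u * φ₂)
        * (Polynomial.aeval φ₁ u.denom * Polynomial.aeval φ₁ v.denom) = 0 := by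
      linear_combination hrel
    rcases mul_eq_zero.mp hrel2 with h | h
    · exact sub_eq_zero.mp h
    · exact absurd h (mul_ne_zero hDu hDv)
  -- `φ₂ ≠ 0`.
  have hφ₂ : φ₂ ≠ 0 := by
    intro h0
    rw [h0] at hkey
    have hΦv : Φ v = 0 := by linear_combination -hkey
    have hv' : v = 0 := Φ.injective (by rw [hΦv, map_zero])
    have hP2 : P.2 = RatFunc.C A.2 := sub_eq_zero.mp hv'
    have hP1nc : ¬∃ c : K, P.1 = RatFunc.C c := fun ⟨c, hc⟩ => hP.1 ⟨(c, A.2), hc, hP2⟩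
    set F : K[X] := MvPolynomial.aeval ![Polynomial.X, Polynomial.C A.2] f with hF_def
    have hFeval : ∀ y₁ : K, F.eval y₁ = MvPolynomial.eval ![y₁, A.2] f := by
      intro y₁
      have h1 : F.eval y₁ = Polynomial.evalRingHom y₁
          (MvPolynomial.eval₂ (algebraMap K K[X]) ![Polynomial.X, Polynomial.C A.2] f) := by
        rw [hF_def, MvPolynomial.aeval_def]; rfl
      rw [h1, MvPolynomial.eval₂_comp_left]
      have hc : (Polynomial.evalRingHom y₁).comp (algebraMap K K[X]) = RingHom.id K := by
        ext x; simp
      have hg' : (⇑(Polynomial.evalRingHom y₁))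
          ∘ (![Polynomial.X, Polynomial.C A.2] : Fin 2 → K[X]) = ![y₁, A.2] := by
        funext i
        fin_cases i <;> simp
      rw [hc, hg', MvPolynomial.eval₂_id]
    have hFzero : F = 0 := by
      by_contra hFne
      have hS : {t : K | P.1.denom.eval t ≠ 0}.Infinite :=
        infinite_nonroots (RatFunc.denom_ne_zero P.1)
      have himg := infinite_ev_image hP1nc hS (fun t ht => ht)
      refine Set.not_infinite.mpr ((Polynomial.finite_setOf_isRoot hFne).subset ?_) himg
      rintro w ⟨t, ht, rfl⟩
      have hden2 : P.2.denom.eval t ≠ 0 := by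
        rw [hP2, RatFunc.denom_C]; simp
      have hpt : ratPoint P t ∈ zeroSet f := hP.2.1 ⟨t, ⟨ht, hden2⟩, rfl⟩
      have h2' : ratPoint P t = (ev t P.1, A.2) := by
        refine Prod.ext rfl ?_
        show P.2.num.eval t / P.2.denom.eval t = A.2
        rw [hP2]
        simp
      show F.eval (ev t P.1) = 0
      rw [hFeval]
      have hz := hpt
      rw [h2'] at hz
      exact hz
    have hsub1 : ∀ x ∈ zeroSet f, x.2 = A.2 := by
      intro x hx
      have hvan : ∀ y ∈ paramImage P, MvPolynomial.eval ![y.1, y.2]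
          ((MvPolynomial.X 1 : MvPolynomial (Fin 2) K) - MvPolynomial.C A.2) = 0 := by
        rintro y ⟨t, ⟨ht1, ht2⟩, rfl⟩
        have : (ratPoint P t).2 = A.2 := by
          show P.2.num.eval t / P.2.denom.eval t = A.2
          rw [hP2]; simp
        simp [this]
      have hcl := hP.2.2 hx _ hvan
      simpa [sub_eq_zero] using hcl
    refine hline ⟨0, 1, Or.inr one_ne_zero, ?_⟩
    ext y
    simp only [Set.mem_setOf_eq, zero_mul, one_mul, zero_add]
    constructor
    · intro hy
      rw [hsub1 y hy, sub_self]
    · intro hy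
      have hy2 : y.2 = A.2 := by
        have := sub_eq_zero.mp hy
        exact this
      show MvPolynomial.eval ![y.1, y.2] f = 0
      rw [hy2, ← hFeval y.1, hFzero]
      simp
  -- Final computation.
  have hC0 : CharZero (RatFunc K) :=
    charZero_of_injective_algebraMap (algebraMap K (RatFunc K)).injective
  have h2φ : (2 * φ₂ : RatFunc K) ≠ 0 := mul_ne_zero two_ne_zero hφ₂
  have hmain : Φ u ^ 2 + Φ v ^ 2 = ((φ₂ ^ 2 + 1) ^ 2 / (2 * φ₂) ^ 2) * Φ v ^ 2 := by
    rw [div_mul_eq_mul_div, eq_div_iff (pow_ne_zero 2 h2φ)]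
    linear_combination (-(2 * φ₂ * Φ u + (φ₂ ^ 2 - 1) * Φ v)) * hkey
  refine ⟨⟨(φ₂ ^ 2 + 1) / (2 * φ₂) * Φ v, ?_⟩, hφ₂, ?_⟩
  · show (comp P.1 φ₁ - RatFunc.C A.1) ^ 2 + (comp P.2 φ₁ - RatFunc.C A.2) ^ 2 = _
    rw [hU, hV, hmain]
    ring
  · rw [hU, hV]
    exact hmain


end ConchoidPaper
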